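/- Let X = i, Y = i cos α + j sin α with cos α = 0 (i.e. Y = j), and t₁, t₂ ∈ ℝ with cos(t) > 0. Setting μ = arcsin(sin(2ε)cos(t)) and τ determined so that exp(ε·X)·exp(t·Y)·exp(ε·X) = exp(τ·Y)·exp(μ·X)·exp(τ·Y), one has, to first order in ε: τ = t/2 + o(ε) and μ = 2ε·cos(t) + o(ε). -/

import Mathlib

open scoped Quaternion Topology

def qi : ℍ[ℝ] := ⟨0, 1, 0, 0⟩
def qj : ℍ[ℝ] := ⟨0, 0, 1, 0⟩

lemma norm_qi : ‖qi‖ = 1 := by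
  have h : ‖qi‖ * ‖qi‖ = 1 := by
    rw [← Quaternion.normSq_eq_norm_mul_self, Quaternion.normSq_def']; simp [qi]
  nlinarith [norm_nonneg qi]

lemma norm_qj : ‖qj‖ = 1 := by
  have h : ‖qj‖ * ‖qj‖ = 1 := by
    rw [← Quaternion.normSq_eq_norm_mul_self, Quaternion.normSq_def']; simp [qj]
  nlinarith [norm_nonneg qj]

lemma exp_smul_unit (r : ℝ) (u : ℍ[ℝ]) (hre : u.re = 0) (hu : ‖u‖ = 1) :
    NormedSpace.exp (r • u) = ((Real.cos r : ℝ) : ℍ[ℝ]) + (Real.sin r) • u := by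
  rcases eq_or_ne r 0 with h|h
  · simp [h]
  · rw [Quaternion.exp_of_re_eq_zero _ (by simp [hre]), norm_smul, hu, mul_one,
      Real.norm_eq_abs, Real.cos_abs, smul_smul]
    congr 2
    rcases lt_or_gt_of_ne h with h'|h'
    · rw [abs_of_neg h', Real.sin_neg]; field_simp
    · rw [abs_of_pos h']; field_simp

open Asymptotics Filter in
/-- The `α = π/2` case of Proposition 2.5: with `X = i`, `Y = j`, `0 < t < π/2`, and
`μ(ε) = arcsin (sin 2ε · cos t)`, there is `τ(ε)` with
`exp(ε X) exp(t Y) exp(ε X) = exp(τ Y) exp(μ X) exp(τ Y)` for small `ε > 0`, and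
to first order `τ(ε) = t/2 + o(ε)` and `μ(ε) = 2ε cos t + o(ε)`. -/
theorem symmetric_switch_first_order (t : ℝ) (ht0 : 0 < t) (ht : t < Real.pi / 2) :
    let X : ℍ[ℝ] := qi
    let Y : ℍ[ℝ] := qj
    let μ : ℝ → ℝ := fun ε => Real.arcsin (Real.sin (2 * ε) * Real.cos t)
    ∃ τ : ℝ → ℝ,
      (∀ᶠ ε in 𝓝[>] (0 : ℝ),
        NormedSpace.exp (ε • X) * NormedSpace.exp (t • Y) * NormedSpace.exp (ε • X)
          = NormedSpace.exp (τ ε • Y) * NormedSpace.exp (μ ε • X) *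
              NormedSpace.exp (τ ε • Y)) ∧
      (fun ε => τ ε - t / 2) =o[𝓝[>] (0 : ℝ)] (fun ε => ε) ∧
      (fun ε => μ ε - 2 * ε * Real.cos t) =o[𝓝[>] (0 : ℝ)] (fun ε => ε) := by
  intro X Y μ
  have hct : 0 < Real.cos t := Real.cos_pos_of_mem_Ioo ⟨by linarith [Real.pi_pos], ht⟩
  have hst : 0 < Real.sin t := Real.sin_pos_of_pos_of_lt_pi ht0 (by linarith [Real.pi_pos])
  refine ⟨fun ε => Real.arctan (Real.tan t / Real.cos (2 * ε)) / 2, ?_, ?_, ?_⟩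
  · filter_upwards [Ioo_mem_nhdsGT_of_mem
      (Set.mem_Ico.mpr ⟨le_refl (0:ℝ), by positivity⟩ :
        (0:ℝ) ∈ Set.Ico (0:ℝ) (Real.pi/4))] with ε hε
    obtain ⟨hε0, hε4⟩ := hε
    set τ := Real.arctan (Real.tan t / Real.cos (2 * ε)) / 2 with hτdef
    have hc2 : 0 < Real.cos (2 * ε) :=
      Real.cos_pos_of_mem_Ioo ⟨by linarith [Real.pi_pos], by linarith⟩
    have habs : |Real.sin (2*ε) * Real.cos t| ≤ 1 := by
      rw [abs_mul]
      calc |Real.sin (2*ε)| * |Real.cos t| ≤ 1 * 1 :=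
            mul_le_mul (Real.abs_sin_le_one _) (Real.abs_cos_le_one _)
              (abs_nonneg _) zero_le_one
        _ = 1 := by ring
    have hsμ : Real.sin (μ ε) = Real.sin (2*ε) * Real.cos t :=
      Real.sin_arcsin (by linarith [abs_le.mp habs]) (by linarith [abs_le.mp habs])
    have hD : 0 < (Real.cos t * Real.cos (2*ε))^2 + Real.sin t ^ 2 := by positivity
    have hsqD : 0 < Real.sqrt ((Real.cos t * Real.cos (2*ε))^2 + Real.sin t ^ 2) :=
      Real.sqrt_pos.mpr hD
    have hcμ : Real.cos (μ ε)
        = Real.sqrt ((Real.cos t * Real.cos (2*ε))^2 + Real.sin t ^ 2) := by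
      rw [show μ ε = Real.arcsin (Real.sin (2*ε) * Real.cos t) from rfl, Real.cos_arcsin]
      congr 1
      nlinarith [Real.sin_sq_add_cos_sq (2*ε), Real.sin_sq_add_cos_sq t]
    have hA : 0 < Real.cos t * Real.cos (2*ε) := by positivity
    have hx1 : Real.sqrt (1 + (Real.tan t / Real.cos (2 * ε))^2)
        = Real.sqrt ((Real.cos t * Real.cos (2*ε))^2 + Real.sin t ^ 2)
            / (Real.cos t * Real.cos (2*ε)) := by
      rw [eq_div_iff (ne_of_gt hA), ← Real.sqrt_sq hA.le, ← Real.sqrt_mul (by positivity)]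
      congr 1
      rw [Real.tan_eq_sin_div_cos]
      field_simp [hct.ne', hc2.ne']
      rw [Real.sq_sqrt (by positivity)]
    have hca : Real.cos (Real.arctan (Real.tan t / Real.cos (2 * ε)))
        = Real.cos t * Real.cos (2*ε)
            / Real.sqrt ((Real.cos t * Real.cos (2*ε))^2 + Real.sin t ^ 2) := by
      rw [Real.cos_arctan, hx1, one_div_div]
    have hsa : Real.sin (Real.arctan (Real.tan t / Real.cos (2 * ε)))
        = Real.sin t / Real.sqrt ((Real.cos t * Real.cos (2*ε))^2 + Real.sin t ^ 2) := by
      rw [Real.sin_arctan, hx1, Real.tan_eq_sin_div_cos]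
      rw [div_div_eq_mul_div, div_mul_eq_mul_div, div_div]
      rw [div_eq_div_iff (by positivity) (ne_of_gt hsqD)]
      field_simp
    have h2τ : 2 * τ = Real.arctan (Real.tan t / Real.cos (2 * ε)) := by
      rw [hτdef]; ring
    have key1 : Real.cos (μ ε) * (Real.cos τ ^ 2 - Real.sin τ ^ 2)
        = Real.cos t * (Real.cos ε ^ 2 - Real.sin ε ^ 2) := by
      rw [← Real.cos_two_mul', ← Real.cos_two_mul', h2τ, hca, hcμ]
      field_simp
    have key2 : Real.cos (μ ε) * (2 * Real.sin τ * Real.cos τ) = Real.sin t := by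
      rw [show 2 * Real.sin τ * Real.cos τ = Real.sin (2 * τ) from (Real.sin_two_mul τ).symm]
      rw [h2τ]
      rw [hsa]
      rw [hcμ]
      field_simp
    have key3 : Real.sin (μ ε) = 2 * Real.sin ε * Real.cos ε * Real.cos t := by
      rw [hsμ, Real.sin_two_mul]
    have pε := Real.sin_sq_add_cos_sq ε
    have pτ := Real.sin_sq_add_cos_sq τ
    have e1 : NormedSpace.exp (ε • X) = ((Real.cos ε : ℝ) : ℍ[ℝ]) + Real.sin ε • qi :=
      exp_smul_unit ε qi rfl norm_qi
    have e2 : NormedSpace.exp (t • Y) = ((Real.cos t : ℝ) : ℍ[ℝ]) + Real.sin t • qj :=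
      exp_smul_unit t qj rfl norm_qj
    have e3 : NormedSpace.exp (μ ε • X) = ((Real.cos (μ ε) : ℝ) : ℍ[ℝ]) + Real.sin (μ ε) • qi :=
      exp_smul_unit (μ ε) qi rfl norm_qi
    have e4 : NormedSpace.exp (τ • Y) = ((Real.cos τ : ℝ) : ℍ[ℝ]) + Real.sin τ • qj :=
      exp_smul_unit τ qj rfl norm_qj
    rw [e1, e2, e3, e4]
    ext <;> simp <;> simp [qi, qj]
    · linear_combination -key1
    · linear_combination -key3 - Real.sin (μ ε) * pτ
    · linear_combination -key2 + Real.sin t * pε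
    · ring
  · -- τ asymptotics
    have hinner : HasDerivAt (fun ε : ℝ => Real.cos (2 * ε)) 0 0 := by
      have h := (Real.hasDerivAt_cos (2 * 0)).comp 0 ((hasDerivAt_id (0:ℝ)).const_mul 2)
      simpa [Function.comp_def] using h
    have hg : HasDerivAt (fun ε : ℝ => Real.tan t / Real.cos (2 * ε)) 0 0 := by
      have h := (hinner.inv (by simp)).const_mul (Real.tan t)
      simpa [div_eq_mul_inv] using h
    have hf : HasDerivAt (fun ε : ℝ => Real.arctan (Real.tan t / Real.cos (2 * ε)) / 2) 0 0 := by
      have h := ((Real.hasDerivAt_arctan (Real.tan t / Real.cos (2 * 0))).comp 0 hg).div_const 2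
      simpa using h
    have h0 : Real.arctan (Real.tan t / Real.cos (2 * (0:ℝ))) / 2 = t / 2 := by
      rw [mul_zero, Real.cos_zero, div_one,
        Real.arctan_tan (by linarith [Real.pi_pos]) ht]
    have hlo := hasDerivAt_iff_isLittleO.mp hf
    refine IsLittleO.mono ?_ nhdsWithin_le_nhds
    have h0' : Real.arctan (Real.tan t) = t :=
      Real.arctan_tan (by linarith [Real.pi_pos]) ht
    refine hlo.congr' (Eventually.of_forall fun y => ?_) (Eventually.of_forall fun y => ?_)
    · simp [h0']
    · simp
  · -- μ asymptotics
    have hinner : HasDerivAt (fun ε : ℝ => Real.sin (2 * ε) * Real.cos t) (2 * Real.cos t) 0 := by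
      have h := ((Real.hasDerivAt_sin (2 * 0)).comp 0
        ((hasDerivAt_id (0:ℝ)).const_mul 2)).mul_const (Real.cos t)
      simpa using h
    have hf : HasDerivAt μ (2 * Real.cos t) 0 := by
      have h := (Real.hasDerivAt_arcsin (by norm_num : Real.sin (2*(0:ℝ)) * Real.cos t ≠ -1)
        (by norm_num : Real.sin (2*(0:ℝ)) * Real.cos t ≠ 1)).comp 0 hinner
      simpa [Function.comp_def] using h
    have hlo := hasDerivAt_iff_isLittleO.mp hf
    have h0 : μ 0 = 0 := by simp [μ]
    refine IsLittleO.mono ?_ nhdsWithin_le_nhds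
    refine hlo.congr' (Eventually.of_forall fun y => ?_) (Eventually.of_forall fun y => ?_)
    · simp [h0]; ring
    · simp
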